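/- For the map f : ℂ → ℂ defined by f(z) = φ(z) + T(Im φ(z)), where φ(0) = 0, φ(z) = z²/|z| for z ≠ 0, and T(s) = 2|s|/√3 + 2, and for the open sector B = {z ∈ ℂ : Re z > 0 and |Im z| < √3·Re z}, every orbit eventually enters and remains in B: for every z ∈ ℂ there exists N ∈ ℕ such that fⁿ(z) ∈ B for all n ≥ N. -/

import Mathlib

open Complex

/-- The degree-two angle-doubling map `φ(r e^{iθ}) = r e^{2iθ}`. -/
noncomputable def phiMap (z : ℂ) : ℂ :=
  if z = 0 then 0 else z ^ 2 / (‖z‖ : ℂ)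

/-- The translation amount `T(s) = 2|s|/√3 + 2`. -/
noncomputable def Tshift (s : ℝ) : ℝ := 2 * |s| / Real.sqrt 3 + 2

/-- The map `f(z) = φ(z) + T(Im φ(z))`. -/
noncomputable def fMap (z : ℂ) : ℂ := phiMap z + (Tshift ((phiMap z).im) : ℂ)

/-- The open sector of points with argument in `(-π/3, π/3)`. -/
def openSector : Set ℂ := {z : ℂ | 0 < z.re ∧ |z.im| < Real.sqrt 3 * z.re}

private lemma phi_re (z : ℂ) (hz : z ≠ 0) :
    (phiMap z).re = (z.re^2 - z.im^2) / ‖z‖ := by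
  simp [phiMap, hz, Complex.div_ofReal_re, pow_two, Complex.mul_re]

private lemma phi_im (z : ℂ) (hz : z ≠ 0) :
    (phiMap z).im = (2*(z.re*z.im)) / ‖z‖ := by
  simp [phiMap, hz, Complex.div_ofReal_im, pow_two, Complex.mul_im]; ring

private lemma f_re (z : ℂ) :
    (fMap z).re = (phiMap z).re + Tshift ((phiMap z).im) := by
  simp [fMap]

private lemma f_im (z : ℂ) : (fMap z).im = (phiMap z).im := by
  simp [fMap]

/-- membership criterion -/
private lemma sector_of_K (z : ℂ) (hz : z ≠ 0)
    (hK : 0 < Real.sqrt 3 * (z.re^2 - z.im^2) + 2*|z.re*z.im| +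
      2*Real.sqrt 3 * ‖z‖) :
    fMap z ∈ openSector := by
  set s := Real.sqrt 3 with hs
  have hs0 : 0 < s := by rw [hs]; positivity
  have hs3 : s^2 = 3 := Real.sq_sqrt (by norm_num)
  set x := z.re; set y := z.im
  set r := ‖z‖ with hr
  have hr0 : 0 < r := by simpa [hr] using norm_pos_iff.mpr hz
  have him : (fMap z).im = (2*(x*y))/r := by rw [f_im, phi_im z hz]
  have habsim : |(phiMap z).im| = 2*|x*y|/r := by
    rw [phi_im z hz, abs_div, abs_of_pos hr0, abs_mul]
    norm_num
    rfl
  have hre : (fMap z).re = (x^2 - y^2)/r + (2*(2*|x*y|/r)/s + 2) := by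
    rw [f_re, phi_re z hz, Tshift, habsim]
  have key : s * (fMap z).re =
      (s*(x^2-y^2) + 2*|x*y| + 2*s*r + 2*|x*y|) / r := by
    rw [hre]; field_simp; ring_nf
  have hpos : 0 < s * (fMap z).re := by
    rw [key]
    apply div_pos _ hr0
    have : 0 ≤ |x*y| := abs_nonneg _
    linarith
  constructor
  · nlinarith [hpos]
  · show |(fMap z).im| < s * (fMap z).re
    rw [him, key, abs_div, abs_of_pos hr0, abs_mul]
    rw [div_lt_div_iff₀ hr0 hr0]
    have h1 : |(2:ℝ)| = 2 := by norm_num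
    rw [h1]
    nlinarith [hr0, hK, abs_nonneg (x*y)]

/-- descent: if K ≤ 0 then the squared modulus drops by at least 4 -/
private lemma descent (z : ℂ) (hz : z ≠ 0)
    (hK : Real.sqrt 3 * (z.re^2 - z.im^2) + 2*|z.re*z.im| +
      2*Real.sqrt 3 * ‖z‖ ≤ 0) :
    Complex.normSq (fMap z) ≤ Complex.normSq z - 4 := by
  set s := Real.sqrt 3 with hs
  have hs0 : 0 < s := by rw [hs]; positivity
  have hs3 : s^2 = 3 := Real.sq_sqrt (by norm_num)
  set x := z.re with hx; set y := z.im with hy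
  set r := ‖z‖ with hr
  have hr0 : 0 < r := by simpa [hr] using norm_pos_iff.mpr hz
  have hr2 : r^2 = x^2 + y^2 := by
    rw [hr, hx, hy, Complex.sq_norm, Complex.normSq_apply]; ring
  have habsim : |(phiMap z).im| = 2*|x*y|/r := by
    rw [phi_im z hz, abs_div, abs_of_pos hr0, abs_mul]
    norm_num
    rfl
  set t := Tshift ((phiMap z).im) with ht
  have htval : t = 2*(2*|x*y|/r)/s + 2 := by rw [ht, Tshift, habsim]
  have ht2 : (t - 2) * (s * r) = 4*|x*y| := by
    rw [htval]; field_simp; ring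
  have htge : 2 ≤ t := by
    rw [htval]
    have : 0 ≤ 2*(2*|x*y|/r)/s := by positivity
    linarith
  -- t + 2a ≤ -2 where a = (x²-y²)/r
  have ha : (phiMap z).re * r = x^2 - y^2 := by
    rw [phi_re z hz]; field_simp
    exact mul_comm _ _
  set a := (phiMap z).re with haa
  have hta : t + 2*a ≤ -2 := by
    nlinarith [hK, hr0, hs0, ht2, ha, mul_pos hs0 hr0]
  have hnormf : Complex.normSq (fMap z) = (a + t)^2 + ((phiMap z).im)^2 := by
    rw [Complex.normSq_apply, f_re z, f_im z]; ring
  have hab : a^2 + ((phiMap z).im)^2 = r^2 := by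
    have h1 : (a^2 + ((phiMap z).im)^2) * r^2 = r^2 * r^2 := by
      rw [phi_im z hz]
      field_simp
      nlinarith [ha, hr2]
    have := mul_right_cancel₀ (by positivity : (r:ℝ)^2 ≠ 0) h1
    linarith [this]
  have hnz : Complex.normSq z = r^2 := by rw [hr, Complex.sq_norm]
  rw [hnormf, hnz]
  nlinarith [htge, hta, hab]

private lemma K_pos_of_mem (z : ℂ) (hmem : z ∈ openSector) :
    0 < Real.sqrt 3 * (z.re^2 - z.im^2) + 2*|z.re*z.im| +
      2*Real.sqrt 3 * ‖z‖ := by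
  obtain ⟨hx, hy⟩ := hmem
  have hs0 : 0 < Real.sqrt 3 := by positivity
  have hs3 : (Real.sqrt 3)^2 = 3 := Real.sq_sqrt (by norm_num)
  have hr : 0 ≤ ‖z‖ := norm_nonneg z
  have h1 : 0 < (Real.sqrt 3 * z.re - |z.im|) * (Real.sqrt 3 * |z.im| + z.re) := by
    apply mul_pos (by linarith) (by positivity)
  have h2 : |z.re*z.im| = z.re*|z.im| := by rw [abs_mul, abs_of_pos hx]
  have expand : (Real.sqrt 3 * z.re - |z.im|) * (Real.sqrt 3 * |z.im| + z.re)
      = Real.sqrt 3*(z.re^2 - z.im^2) + 2*(z.re*|z.im|) := by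
    linear_combination (z.re * (|z.im| * hs3)) - Real.sqrt 3 * (_root_.sq_abs z.im)
  rw [expand] at h1
  nlinarith [mul_nonneg hs0.le hr]

private lemma f_zero_mem : fMap 0 ∈ openSector := by
  have h0 : phiMap 0 = 0 := by simp [phiMap]
  have : fMap 0 = ((2:ℝ) : ℂ) := by
    simp [fMap, h0, Tshift]
  rw [this]
  constructor
  · norm_num
  · simp

private lemma invariant (z : ℂ) (hz : z ∈ openSector) : fMap z ∈ openSector := by
  have hne : z ≠ 0 := by
    intro h; rw [h] at hz; exact lt_irrefl 0 hz.1
  exact sector_of_K z hne (K_pos_of_mem z hz)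

private lemma step (z : ℂ) :
    fMap z ∈ openSector ∨ Complex.normSq (fMap z) ≤ Complex.normSq z - 4 := by
  by_cases hz : z = 0
  · left; rw [hz]; exact f_zero_mem
  by_cases hK : 0 < Real.sqrt 3 * (z.re^2 - z.im^2) + 2*|z.re*z.im| +
      2*Real.sqrt 3 * ‖z‖
  · exact Or.inl (sector_of_K z hz hK)
  · exact Or.inr (descent z hz (le_of_not_gt hK))

private lemma reach : ∀ k : ℕ, ∀ z : ℂ, Complex.normSq z ≤ 4*k →
    ∃ n : ℕ, fMap^[n] z ∈ openSector := by
  intro k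
  induction k with
  | zero =>
    intro z hzle
    have : z = 0 := by
      have h0 : Complex.normSq z = 0 :=
        le_antisymm (by simpa using hzle) (Complex.normSq_nonneg z)
      exact Complex.normSq_eq_zero.mp h0
    exact ⟨1, by simp [this, f_zero_mem]⟩
  | succ k ih =>
    intro z hzle
    rcases step z with h | h
    · exact ⟨1, by simpa using h⟩
    · obtain ⟨n, hn⟩ := ih (fMap z) (by push_cast at hzle ⊢; linarith)
      exact ⟨n + 1, by rwa [Function.iterate_succ_apply]⟩

theorem fMap_orbits_eventually_in_open_sector :
    ∀ z : ℂ, ∃ N : ℕ, ∀ n ≥ N, fMap^[n] z ∈ openSector := by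
  intro z
  obtain ⟨k, hk⟩ := exists_nat_ge (Complex.normSq z)
  obtain ⟨N, hN⟩ := reach k z (by linarith)
  refine ⟨N, fun n hn => ?_⟩
  obtain ⟨m, rfl⟩ := Nat.exists_eq_add_of_le hn
  rw [add_comm, Function.iterate_add_apply]
  induction m with
  | zero => exact hN
  | succ m ihm =>
    rw [Function.iterate_succ_apply']
    exact invariant _ (ihm (by omega))
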